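/- For box parameters L ≥ 0, q₀ > 0, h ≥ 0, θ, α ∈ ℝ, define for z ∈ ℝ ∖ {0, q₀, −q₀}: a(z) = (1/(λ(z)μ(z)))·e^{i(2Lλ(z)+θ)}·{ μ(z)cos(2Lμ(z))[λ(z)cos θ − i k(z) sin θ] + i sin(2Lμ(z))[ h q₀ cos α − k(z)(k(z)cos θ − i λ(z)sin θ) ] } and b(z) = (1/(λ(z)μ(z)))·{ −q₀ μ(z) sin θ cos(2Lμ(z)) + [h k(z)cos α − k(z) q₀ cos θ − i h λ(z) sin α] sin(2Lμ(z)) }, where k(z) = (z + q₀²/z)/2, λ(z) = (z − q₀²/z)/2, and μ(z) is a square root of k(z)² − h² (a and b are independent of the choice of square root since they depend on μ only through cos(2Lμ) and sin(2Lμ)/μ). Then for all real z ∉ {0, q₀, −q₀}: a(q₀²/z) = e^{2iθ}·conj(a(z)) and b(q₀²/z) = −conj(b(z)); consequently ρ(z) = b(z)/a(z) satisfies ρ(q₀²/z) = −e^{−2iθ}·conj(ρ(z)) wherever a(z) ≠ 0. -/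

import Mathlib

open Complex

/-- `k(z) = (z + q₀²/z)/2`. -/
noncomputable def kk (q₀ z : ℝ) : ℝ := (z + q₀ ^ 2 / z) / 2

/-- `λ(z) = (z − q₀²/z)/2`. -/
noncomputable def lam (q₀ z : ℝ) : ℝ := (z - q₀ ^ 2 / z) / 2

/-- The explicit box scattering coefficient `a(z)`, for a choice `μ` of square root of
`k(z)² − h²`. -/
noncomputable def aBox (L q₀ h θ α : ℝ) (μ : ℝ → ℂ) (z : ℝ) : ℂ :=
  1 / ((lam q₀ z : ℂ) * μ z) *
    Complex.exp (Complex.I * ((2 * L * lam q₀ z + θ : ℝ) : ℂ)) *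
    (μ z * Complex.cos (2 * (L : ℂ) * μ z) *
        ((lam q₀ z : ℂ) * (Real.cos θ : ℂ) - Complex.I * (kk q₀ z : ℂ) * (Real.sin θ : ℂ)) +
      Complex.I * Complex.sin (2 * (L : ℂ) * μ z) *
        (((h * q₀ * Real.cos α : ℝ) : ℂ) -
          (kk q₀ z : ℂ) *
            ((kk q₀ z : ℂ) * (Real.cos θ : ℂ) -
              Complex.I * (lam q₀ z : ℂ) * (Real.sin θ : ℂ))))

/-- The explicit box scattering coefficient `b(z)`, for a choice `μ` of square root of
`k(z)² − h²`. -/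
noncomputable def bBox (L q₀ h θ α : ℝ) (μ : ℝ → ℂ) (z : ℝ) : ℂ :=
  1 / ((lam q₀ z : ℂ) * μ z) *
    (-(q₀ : ℂ) * μ z * (Real.sin θ : ℂ) * Complex.cos (2 * (L : ℂ) * μ z) +
      (((h * kk q₀ z * Real.cos α - kk q₀ z * q₀ * Real.cos θ : ℝ) : ℂ) -
          Complex.I * (h : ℂ) * (lam q₀ z : ℂ) * (Real.sin α : ℂ)) *
        Complex.sin (2 * (L : ℂ) * μ z))

/-- symmetry of the box scattering coefficients under `z ↦ q₀²/z`:
`a(q₀²/z) = e^{2iθ}·conj(a(z))`, `b(q₀²/z) = −conj(b(z))`, and consequently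
`ρ(q₀²/z) = −e^{−2iθ}·conj(ρ(z))` wherever `a(z) ≠ 0`. -/
theorem box_scattering_symmetry (L q₀ h θ α : ℝ) (hL : 0 ≤ L) (hq₀ : 0 < q₀) (hh : 0 ≤ h)
    (μ : ℝ → ℂ)
    (hμ : ∀ z : ℝ, z ≠ 0 → (μ z) ^ 2 = (kk q₀ z : ℂ) ^ 2 - (h : ℂ) ^ 2) :
    ∀ z : ℝ, z ≠ 0 → z ≠ q₀ → z ≠ -q₀ →
      aBox L q₀ h θ α μ (q₀ ^ 2 / z) =
        Complex.exp (2 * Complex.I * θ) * (starRingEnd ℂ) (aBox L q₀ h θ α μ z) ∧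
      bBox L q₀ h θ α μ (q₀ ^ 2 / z) = -(starRingEnd ℂ) (bBox L q₀ h θ α μ z) ∧
      (aBox L q₀ h θ α μ z ≠ 0 →
        bBox L q₀ h θ α μ (q₀ ^ 2 / z) / aBox L q₀ h θ α μ (q₀ ^ 2 / z) =
          -Complex.exp (-(2 * Complex.I * θ)) *
            (starRingEnd ℂ) (bBox L q₀ h θ α μ z / aBox L q₀ h θ α μ z)) := by
  intro z hz hzq hzq'
  have hw : q₀ ^ 2 / z ≠ 0 := div_ne_zero (pow_ne_zero _ hq₀.ne') hz
  have hk : kk q₀ (q₀ ^ 2 / z) = kk q₀ z := by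
    unfold kk; field_simp; ring
  have hl : lam q₀ (q₀ ^ 2 / z) = -lam q₀ z := by
    unfold lam; field_simp; ring
  have hlR : lam q₀ z ≠ 0 := by
    unfold lam
    intro hcon
    have h2 : z ^ 2 = q₀ ^ 2 := by
      field_simp at hcon
      nlinarith [hcon]
    rcases sq_eq_sq_iff_eq_or_eq_neg.mp h2 with h | h
    · exact hzq h
    · exact hzq' h
  have hlne : (lam q₀ z : ℂ) ≠ 0 := by
    simpa using hlR
  set m : ℂ := (starRingEnd ℂ) (μ z) with hm
  have hmsq : μ (q₀ ^ 2 / z) ^ 2 = m ^ 2 := by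
    rw [hμ _ hw, hk, hm, ← map_pow, hμ _ hz]
    rw [map_sub, map_pow, map_pow, Complex.conj_ofReal, Complex.conj_ofReal]
  have hcase : μ (q₀ ^ 2 / z) = m ∨ μ (q₀ ^ 2 / z) = -m := by
    have h0 : (μ (q₀ ^ 2 / z) - m) * (μ (q₀ ^ 2 / z) + m) = 0 := by
      linear_combination hmsq
    rcases mul_eq_zero.mp h0 with h | h
    · exact Or.inl (sub_eq_zero.mp h)
    · exact Or.inr (by linear_combination h)
  have hccos : (starRingEnd ℂ) (Complex.cos (2 * (L : ℂ) * μ z)) =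
      Complex.cos (2 * (L : ℂ) * m) := by
    rw [← Complex.cos_conj]
    congr 1
    rw [map_mul, map_mul, map_ofNat, Complex.conj_ofReal, ← hm]
  have hcsin : (starRingEnd ℂ) (Complex.sin (2 * (L : ℂ) * μ z)) =
      Complex.sin (2 * (L : ℂ) * m) := by
    rw [← Complex.sin_conj]
    congr 1
    rw [map_mul, map_mul, map_ofNat, Complex.conj_ofReal, ← hm]
  have hcexp : ∀ r : ℝ, (starRingEnd ℂ) (Complex.exp (Complex.I * (r : ℂ))) =
      Complex.exp (-(Complex.I * (r : ℂ))) := by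
    intro r
    rw [← Complex.exp_conj, map_mul, Complex.conj_I, Complex.conj_ofReal, neg_mul]
  have hexp2 : Complex.exp (Complex.I * ((2 * L * -lam q₀ z + θ : ℝ) : ℂ)) =
      Complex.exp (2 * Complex.I * (θ : ℂ)) *
        Complex.exp (-(Complex.I * ((2 * L * lam q₀ z + θ : ℝ) : ℂ))) := by
    rw [← Complex.exp_add]
    congr 1
    push_cast
    ring
  have ha : aBox L q₀ h θ α μ (q₀ ^ 2 / z) =
      Complex.exp (2 * Complex.I * θ) * (starRingEnd ℂ) (aBox L q₀ h θ α μ z) := by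
    unfold aBox
    simp only [hk, hl]
    rw [hexp2]
    simp only [map_mul, map_add, map_sub, map_div₀, map_one, conj_I, Complex.conj_ofReal,
      hccos, hcsin, hcexp, ← hm]
    rcases hcase with hc | hc
    · rw [hc]
      push_cast
      rcases eq_or_ne m 0 with hm0 | hm0
      · simp [hm0]
      · field_simp
        ring
    · rw [hc]
      rw [show 2 * (L : ℂ) * -m = -(2 * (L : ℂ) * m) by ring, Complex.cos_neg,
        Complex.sin_neg]
      push_cast
      rcases eq_or_ne m 0 with hm0 | hm0
      · simp [hm0]
      · field_simp
        ring
  have hb : bBox L q₀ h θ α μ (q₀ ^ 2 / z) = -(starRingEnd ℂ) (bBox L q₀ h θ α μ z) := by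
    unfold bBox
    simp only [hk, hl]
    simp only [map_mul, map_add, map_sub, map_div₀, map_one, map_neg, conj_I,
      Complex.conj_ofReal, hccos, hcsin, ← hm]
    rcases hcase with hc | hc
    · rw [hc]
      push_cast
      rcases eq_or_ne m 0 with hm0 | hm0
      · simp [hm0]
      · field_simp
    · rw [hc]
      rw [show 2 * (L : ℂ) * -m = -(2 * (L : ℂ) * m) by ring, Complex.cos_neg,
        Complex.sin_neg]
      push_cast
      rcases eq_or_ne m 0 with hm0 | hm0
      · simp [hm0]
      · field_simp
        ring
  refine ⟨ha, hb, fun hane => ?_⟩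
  have hane' : (starRingEnd ℂ) (aBox L q₀ h θ α μ z) ≠ 0 := by
    simpa using hane
  rw [ha, hb, map_div₀, Complex.exp_neg]
  field_simp [Complex.exp_ne_zero]
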